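/- Let n ≥ 3, c > 0, and suppose 0 < ε < (1/(nc))^{2/(n−2)} · (n/(n−1))^{n/(n−2)}. Then the unique positive root ρ₁ of cρⁿ + ρ² − ε = 0 satisfies ((n−1)/n)^{1/2}·√ε < ρ₁ < √ε. -/

import Mathlib

/-- For `n ≥ 3`, `c > 0` and `0 < ε < (1/(nc))^(2/(n-2))·(n/(n-1))^(n/(n-2))`, the unique
positive root `ρ₁` of `cρⁿ + ρ² − ε = 0` satisfies `√((n-1)/n)·√ε < ρ₁ < √ε`. -/
theorem bounds_rho_one (n : ℕ) (hn : 3 ≤ n) (c ε : ℝ) (hc : 0 < c) (hε : 0 < ε)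
    (hεb : ε < (1 / (n * c)) ^ ((2 : ℝ) / ((n : ℝ) - 2)) *
      ((n : ℝ) / ((n : ℝ) - 1)) ^ ((n : ℝ) / ((n : ℝ) - 2))) :
    ∀ ρ₁ : ℝ, 0 < ρ₁ → c * ρ₁ ^ n + ρ₁ ^ 2 - ε = 0 →
      Real.sqrt (((n : ℝ) - 1) / n) * Real.sqrt ε < ρ₁ ∧ ρ₁ < Real.sqrt ε := by
  intro ρ₁ hρ hroot
  have hN : (3:ℝ) ≤ (n:ℝ) := by exact_mod_cast hn
  set N : ℝ := (n : ℝ) with hNdef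
  have hN0 : (0:ℝ) < N := by linarith
  have hN1 : (0:ℝ) < N - 1 := by linarith
  have hN2 : (0:ℝ) < N - 2 := by linarith
  have hρn : 0 < ρ₁ ^ n := pow_pos hρ n
  have hsum : c * ρ₁ ^ n + ρ₁ ^ 2 = ε := by linarith
  have hupper : ρ₁ < Real.sqrt ε := by
    refine (Real.lt_sqrt hρ.le).mpr ?_
    nlinarith
  refine ⟨?_, hupper⟩
  by_contra hcon
  push_neg at hcon
  -- from hcon : ρ₁ ≤ √((N-1)/N) * √ε, get ρ₁^2 ≤ (N-1)/N * ε
  have hX : (0:ℝ) ≤ (N - 1) / N * ε := by positivity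
  have hsq : ρ₁ ^ 2 ≤ (N - 1) / N * ε := by
    have h1 : Real.sqrt ((N - 1) / N) * Real.sqrt ε = Real.sqrt ((N - 1) / N * ε) :=
      (Real.sqrt_mul (by positivity) _).symm
    rw [h1] at hcon
    have h2 := pow_le_pow_left₀ hρ.le hcon 2
    rwa [Real.sq_sqrt hX] at h2
  -- hence c * ρ₁^n ≥ ε / N
  have hkey : (N - 1) / N * ε + ε / N = ε := by field_simp; ring
  have hc1 : ε / N ≤ c * ρ₁ ^ n := by linarith
  have hρn' : ε / (N * c) ≤ ρ₁ ^ n := by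
    rw [div_le_iff₀ (by positivity)]
    have h := mul_le_mul_of_nonneg_left hc1 hN0.le
    have h2 : N * (ε / N) = ε := by field_simp
    nlinarith [h, h2]
  -- raise to power 2/N
  have hA : (ε / (N * c)) ^ ((2:ℝ) / N) ≤ ρ₁ ^ 2 := by
    have h1 : (ε / (N * c)) ^ ((2:ℝ) / N) ≤ (ρ₁ ^ n) ^ ((2:ℝ) / N) :=
      Real.rpow_le_rpow (by positivity) hρn' (by positivity)
    have h2 : (ρ₁ ^ n : ℝ) ^ ((2:ℝ) / N) = ρ₁ ^ 2 := by
      rw [← Real.rpow_natCast ρ₁ n, ← Real.rpow_mul hρ.le, ← hNdef]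
      rw [show N * (2 / N) = 2 by field_simp]
      norm_num [Real.rpow_two]
    linarith [h2 ▸ h1]
  have hmain : (ε / (N * c)) ^ ((2:ℝ) / N) ≤ (N - 1) / N * ε := le_trans hA hsq
  set a : ℝ := 1 / (N * c) with hadef
  have ha0 : 0 < a := by positivity
  have hεa : ε / (N * c) = ε * a := by rw [hadef]; ring
  set b : ℝ := N / (N - 1) with hbdef
  have hb0 : 0 < b := by positivity
  -- split (ε*a)^(2/N) = ε^(2/N) * a^(2/N)
  have hsplit : (ε * a) ^ ((2:ℝ) / N) = ε ^ ((2:ℝ) / N) * a ^ ((2:ℝ) / N) :=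
    Real.mul_rpow hε.le ha0.le
  have hεsplit : ε = ε ^ ((2:ℝ) / N) * ε ^ ((N - 2) / N) := by
    rw [← Real.rpow_add hε]
    rw [show (2:ℝ) / N + (N - 2) / N = 1 by field_simp; ring]
    rw [Real.rpow_one]
  have hε2N : (0:ℝ) < ε ^ ((2:ℝ) / N) := Real.rpow_pos_of_pos hε _
  -- a^(2/N) * b ≤ ε^((N-2)/N)
  have hB : a ^ ((2:ℝ) / N) * b ≤ ε ^ ((N - 2) / N) := by
    have h1 : ε ^ ((2:ℝ) / N) * a ^ ((2:ℝ) / N) ≤ (N - 1) / N * (ε ^ ((2:ℝ) / N) * ε ^ ((N - 2) / N)) := by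
      rw [← hsplit, ← hεa, ← hεsplit]; exact hmain
    have h1' : ε ^ ((2:ℝ) / N) * a ^ ((2:ℝ) / N) ≤ ε ^ ((2:ℝ) / N) * ((N - 1) / N * ε ^ ((N - 2) / N)) := by
      calc ε ^ ((2:ℝ) / N) * a ^ ((2:ℝ) / N)
          ≤ (N - 1) / N * (ε ^ ((2:ℝ) / N) * ε ^ ((N - 2) / N)) := h1
        _ = ε ^ ((2:ℝ) / N) * ((N - 1) / N * ε ^ ((N - 2) / N)) := by ring
    have h2 : a ^ ((2:ℝ) / N) ≤ (N - 1) / N * ε ^ ((N - 2) / N) :=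
      le_of_mul_le_mul_left h1' hε2N
    have h3 : a ^ ((2:ℝ) / N) * b ≤ ((N - 1) / N * ε ^ ((N - 2) / N)) * b :=
      mul_le_mul_of_nonneg_right h2 hb0.le
    have h4 : ((N - 1) / N * ε ^ ((N - 2) / N)) * b = ε ^ ((N - 2) / N) := by
      rw [hbdef]; field_simp
    linarith
  -- raise to power N/(N-2)
  have hfinal : a ^ ((2:ℝ) / (N - 2)) * b ^ (N / (N - 2)) ≤ ε := by
    have h1 : (a ^ ((2:ℝ) / N) * b) ^ (N / (N - 2)) ≤ (ε ^ ((N - 2) / N)) ^ (N / (N - 2)) :=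
      Real.rpow_le_rpow (by positivity) hB (by positivity)
    have h2 : (ε ^ ((N - 2) / N)) ^ (N / (N - 2)) = ε := by
      rw [← Real.rpow_mul hε.le]
      rw [show (N - 2) / N * (N / (N - 2)) = 1 by field_simp]
      exact Real.rpow_one ε
    have h3 : (a ^ ((2:ℝ) / N) * b) ^ (N / (N - 2)) =
        a ^ ((2:ℝ) / (N - 2)) * b ^ (N / (N - 2)) := by
      rw [Real.mul_rpow (by positivity) hb0.le, ← Real.rpow_mul ha0.le]
      rw [show (2:ℝ) / N * (N / (N - 2)) = 2 / (N - 2) by field_simp]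
    rw [h3, h2] at h1
    exact h1
  rw [hadef, hbdef] at hfinal
  linarith
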